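/- arXiv:1705.04241 — 3 statements merged into one kernel-verified Lean document; each statement's English description precedes it below -/
import Mathlib

section
/- Let d ≥ 1, let G_1,…,G_d̄ be a partition of {1,…,d} into nonempty disjoint groups, let α ∈ ℝ^d̄ have strictly positive entries, and let p, q, s, t ∈ [1,∞] satisfy 1/p + 1/q = 1 and 1/s + 1/t = 1. Then for all a, b ∈ ℝ^d, the Hölder-type inequality aᵀb ≤ ‖a‖_{α-(p,s)} · ‖b‖_{α⁻¹-(q,t)} holds. -/
open scoped ENNReal BigOperators
open MeasureTheory Filter

/-- The l_p norm (p ∈ [1,∞], with sup modification at p = ∞) of a finite real vector. -/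
noncomputable def lpn (p : ℝ≥0∞) {ι : Type} [Fintype ι] (x : ι → ℝ) : ℝ :=
  ‖(WithLp.equiv p (ι → ℝ)).symm x‖

/-- The α-(p,s) groupwise norm: ‖x‖ = ( Σ_i α_i^s ‖x(G_i)‖_p^s )^{1/s}. -/
noncomputable def gnorm {d dbar : ℕ} (G : Fin dbar → Finset (Fin d)) (α : Fin dbar → ℝ)
    (p s : ℝ≥0∞) (x : Fin d → ℝ) : ℝ :=
  lpn s (fun i => α i * lpn p (fun j : {k // k ∈ G i} => x j.1))

/-- G_1, …, G_d̄ form a partition of {1,…,d} into nonempty disjoint groups. -/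
def IsPartition {d dbar : ℕ} (G : Fin dbar → Finset (Fin d)) : Prop :=
  (∀ i, (G i).Nonempty) ∧ (∀ i j, i ≠ j → Disjoint (G i) (G j)) ∧ (∀ k, ∃ i, k ∈ G i)

lemma lpn_top_eq {ι : Type} [Fintype ι] (x : ι → ℝ) : lpn ∞ x = ⨆ i, |x i| := by
  rw [lpn, PiLp.norm_eq_ciSup]
  simp [Real.norm_eq_abs]

lemma lpn_eq_sum {ι : Type} [Fintype ι] {p : ℝ≥0∞} (hp : 0 < p.toReal) (x : ι → ℝ) :
    lpn p x = (∑ i, |x i| ^ p.toReal) ^ (1 / p.toReal) := by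
  rw [lpn, PiLp.norm_eq_sum hp]
  simp [Real.norm_eq_abs]

lemma holder_one_top {ι : Type} [Fintype ι] (x y : ι → ℝ) :
    ∑ i, x i * y i ≤ lpn 1 x * lpn ∞ y := by
  have h1 : lpn 1 x = ∑ i, |x i| := by
    rw [lpn_eq_sum (by simp)]; simp
  rw [h1, lpn_top_eq, Finset.sum_mul]
  refine Finset.sum_le_sum fun i _ => ?_
  calc x i * y i ≤ |x i * y i| := le_abs_self _
    _ = |x i| * |y i| := abs_mul _ _
    _ ≤ |x i| * ⨆ j, |y j| := by
        refine mul_le_mul_of_nonneg_left ?_ (abs_nonneg _)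
        exact le_ciSup (f := fun j => |y j|) (Set.Finite.bddAbove (Set.finite_range _)) i

lemma holder_lpn {ι : Type} [Fintype ι] {p q : ℝ≥0∞} (h : p⁻¹ + q⁻¹ = 1)
    (x y : ι → ℝ) : ∑ i, x i * y i ≤ lpn p x * lpn q y := by
  rcases eq_or_ne p 1 with hp1 | hp1
  · have hq : q = ∞ := by
      subst hp1
      have h' : (1:ℝ≥0∞) + q⁻¹ = 1 + 0 := by simpa using h
      exact ENNReal.inv_eq_zero.mp ((ENNReal.add_right_inj ENNReal.one_ne_top).mp h')
    subst hp1; subst hq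
    exact holder_one_top x y
  rcases eq_or_ne q 1 with hq1 | hq1
  · have hp : p = ∞ := by
      subst hq1
      rw [add_comm] at h
      have h' : (1:ℝ≥0∞) + p⁻¹ = 1 + 0 := by simpa using h
      exact ENNReal.inv_eq_zero.mp ((ENNReal.add_right_inj ENNReal.one_ne_top).mp h')
    subst hq1; subst hp
    calc ∑ i, x i * y i = ∑ i, y i * x i := by simp [mul_comm]
      _ ≤ lpn 1 y * lpn ∞ x := holder_one_top y x
      _ = lpn ∞ x * lpn 1 y := mul_comm _ _
  -- now 1 < p < ∞ and 1 < q < ∞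
  have hp0 : p ≠ 0 := by
    rintro rfl; simp at h
  have hq0 : q ≠ 0 := by
    rintro rfl; simp [add_comm] at h
  have hptop : p ≠ ∞ := by
    rintro rfl
    simp only [ENNReal.inv_top, zero_add] at h
    exact hq1 (by simpa using congrArg (·⁻¹) h)
  have hqtop : q ≠ ∞ := by
    rintro rfl
    simp only [ENNReal.inv_top, add_zero] at h
    exact hp1 (by simpa using congrArg (·⁻¹) h)
  have hplt : 1 < p := by
    rcases lt_or_ge 1 p with h' | h'
    · exact h'
    · rcases h'.eq_or_lt with h'' | h''
      · exact absurd h'' hp1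
      · exfalso
        have : (1 : ℝ≥0∞) < p⁻¹ := by
          rw [ENNReal.lt_inv_iff_lt_inv]; simpa using h''
        have : (1 : ℝ≥0∞) < 1 := lt_of_lt_of_le this (by
          rw [← h]; exact le_self_add)
        exact lt_irrefl _ this
  have hsum : (p.toReal)⁻¹ + (q.toReal)⁻¹ = 1 := by
    have h' : (p⁻¹ + q⁻¹).toReal = 1 := by rw [h]; simp
    rwa [ENNReal.toReal_add (by simp [hp0]) (by simp [hq0]), ENNReal.toReal_inv,
      ENNReal.toReal_inv] at h'
  have hpr : 1 < p.toReal := by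
    have := (ENNReal.toReal_lt_toReal (by simp) hptop).mpr hplt
    simpa using this
  have hconj : Real.HolderConjugate p.toReal q.toReal := Real.holderConjugate_iff.mpr ⟨hpr, hsum⟩
  rw [lpn_eq_sum (by positivity) x, lpn_eq_sum hconj.symm.pos y]
  simpa using Real.inner_le_Lp_mul_Lq Finset.univ x y hconj

theorem statement0 {d dbar : ℕ} (hd : 1 ≤ d)
    (G : Fin dbar → Finset (Fin d)) (hG : IsPartition G)
    (α : Fin dbar → ℝ) (hα : ∀ i, 0 < α i)
    (p q s t : ℝ≥0∞) (hp : 1 ≤ p) (hq : 1 ≤ q) (hs : 1 ≤ s) (ht : 1 ≤ t)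
    (hpq : 1 / p + 1 / q = 1) (hst : 1 / s + 1 / t = 1)
    (a b : Fin d → ℝ) :
    ∑ k, a k * b k ≤ gnorm G α p s a * gnorm G (fun i => (α i)⁻¹) q t b := by
  have hpq' : p⁻¹ + q⁻¹ = 1 := by simpa [one_div] using hpq
  have hst' : s⁻¹ + t⁻¹ = 1 := by simpa [one_div] using hst
  set u : Fin dbar → ℝ := fun i => α i * lpn p (fun j : {k // k ∈ G i} => a j.1) with hu
  set v : Fin dbar → ℝ := fun i => (α i)⁻¹ * lpn q (fun j : {k // k ∈ G i} => b j.1) with hv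
  have key : ∀ i, ∑ k ∈ G i, a k * b k ≤ u i * v i := by
    intro i
    have h1 : ∑ k ∈ G i, a k * b k = ∑ j : {k // k ∈ G i}, a j.1 * b j.1 :=
      (Finset.sum_coe_sort (G i) fun k => a k * b k).symm
    have h2 := holder_lpn hpq' (fun j : {k // k ∈ G i} => a j.1)
      (fun j : {k // k ∈ G i} => b j.1)
    have h3 : u i * v i = lpn p (fun j : {k // k ∈ G i} => a j.1) *
        lpn q (fun j : {k // k ∈ G i} => b j.1) := by
      rw [hu, hv]
      have hne : α i ≠ 0 := (hα i).ne'
      field_simp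
    rw [h1, h3]
    exact h2
  have hcover : (Finset.univ : Finset (Fin d)) = Finset.univ.biUnion G := by
    ext k
    simp only [Finset.mem_univ, Finset.mem_biUnion, true_iff, true_and]
    exact hG.2.2 k
  have split : ∑ k, a k * b k = ∑ i, ∑ k ∈ G i, a k * b k := by
    rw [hcover, Finset.sum_biUnion]
    intro i _ j _ hij
    exact hG.2.1 i j hij
  calc ∑ k, a k * b k = ∑ i, ∑ k ∈ G i, a k * b k := split
    _ ≤ ∑ i, u i * v i := Finset.sum_le_sum fun i _ => key i
    _ ≤ lpn s u * lpn t v := holder_lpn hst' u v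
    _ = gnorm G α p s a * gnorm G (fun i => (α i)⁻¹) q t b := rfl
end

section
/- Let d ≥ 1, let G_1,…,G_d̄ be a partition of {1,…,d} into nonempty disjoint groups, let α ∈ ℝ^d̄ have strictly positive entries, let 1 < p, s < ∞, and let a, b ∈ ℝ^d with a ≠ 0. Then equality ‖a + b‖_{α-(p,s)} = ‖a‖_{α-(p,s)} + ‖b‖_{α-(p,s)} holds if and only if there exists a nonnegative real number τ such that τ·a = b. -/
open scoped ENNReal BigOperators
open MeasureTheory Filter

open Set

/-- A space where `‖·‖ ^ q` is strictly convex (some `q > 1`) is a strictly convex space. -/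
theorem myStrictConvexSpace_of_rpow {E : Type*} [NormedAddCommGroup E] [NormedSpace ℝ E]
    {q : ℝ} (hq : 1 < q)
    (h : StrictConvexOn ℝ Set.univ (fun x : E => ‖x‖ ^ q)) : StrictConvexSpace ℝ E := by
  refine StrictConvexSpace.of_norm_add fun x y hx hy hxy => ?_
  rcases eq_or_ne x y with rfl | hne
  · exact SameRay.refl _
  · exfalso
    have h2 := h.2 (mem_univ x) (mem_univ y) hne one_half_pos one_half_pos (by norm_num)
    have e1 : (1/2 : ℝ) • x + (1/2 : ℝ) • y = (1/2 : ℝ) • (x + y) := by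
      rw [smul_add]
    simp only [e1] at h2
    simp only [norm_smul, hx, hy, hxy, smul_eq_mul] at h2
    norm_num at h2

theorem myStrictConvexOn_abs_rpow {q : ℝ} (hq : 1 < q) :
    StrictConvexOn ℝ Set.univ (fun t : ℝ => |t| ^ q) := by
  have hq0 : (0 : ℝ) < q := one_pos.trans hq
  refine ⟨convex_univ, fun x _ y _ hxy a b ha hb hab => ?_⟩
  rcases eq_or_ne |x| |y| with h | h
  · have hy0 : y ≠ 0 := by
      rintro rfl
      simp only [abs_zero, abs_eq_zero] at h
      exact hxy (by simp [h])
    have hx : x = -y := by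
      rcases abs_eq_abs.mp h with h1 | h1
      · exact absurd h1 hxy
      · exact h1
    have habs : |a • x + b • y| = |b - a| * |y| := by
      rw [hx]; rw [smul_eq_mul, smul_eq_mul]
      have : a * (-y) + b * y = (b - a) * y := by ring
      rw [this, abs_mul]
    have hlt : |a • x + b • y| < |y| := by
      rw [habs]
      have h1 : |b - a| < 1 := by
        rw [abs_sub_lt_iff]; constructor <;> linarith
      calc |b - a| * |y| < 1 * |y| := by
            exact mul_lt_mul_of_pos_right h1 (abs_pos.mpr hy0)
        _ = |y| := one_mul _
    calc |a • x + b • y| ^ q < |y| ^ q :=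
          Real.rpow_lt_rpow (abs_nonneg _) hlt hq0
      _ = a • |x| ^ q + b • |y| ^ q := by
          rw [hx, abs_neg, smul_eq_mul, smul_eq_mul, ← add_mul, hab, one_mul]
  · have h1 : |a • x + b • y| ≤ a • |x| + b • |y| := by
      calc |a • x + b • y| ≤ |a • x| + |b • y| := abs_add_le _ _
        _ = a • |x| + b • |y| := by
            rw [smul_eq_mul, smul_eq_mul, abs_mul, abs_mul, abs_of_pos ha, abs_of_pos hb]
            rfl
    calc |a • x + b • y| ^ q ≤ (a • |x| + b • |y|) ^ q :=
          Real.rpow_le_rpow (abs_nonneg _) h1 hq0.le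
      _ < a • |x| ^ q + b • |y| ^ q :=
          (strictConvexOn_rpow hq).2 (abs_nonneg x) (abs_nonneg y) h ha hb hab

theorem myStrictConvexOn_sum_pi {ι : Type} [Fintype ι] [Nonempty ι]
    {E : ι → Type*} [∀ i, AddCommGroup (E i)] [∀ i, Module ℝ (E i)]
    (F : ∀ i, E i → ℝ) (hF : ∀ i, StrictConvexOn ℝ Set.univ (F i)) :
    StrictConvexOn ℝ Set.univ (fun x : ∀ i, E i => ∑ i, F i (x i)) := by
  refine ⟨convex_univ, fun x _ y _ hxy a b ha hb hab => ?_⟩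
  obtain ⟨i0, hi0⟩ : ∃ i, x i ≠ y i := by
    by_contra hc; push_neg at hc; exact hxy (funext hc)
  have key : ∑ i, F i ((a • x + b • y) i) < ∑ i, (a * F i (x i) + b * F i (y i)) := by
    refine Finset.sum_lt_sum (fun i _ => ?_) ⟨i0, Finset.mem_univ i0, ?_⟩
    · exact (hF i).convexOn.2 (mem_univ _) (mem_univ _) ha.le hb.le hab
    · exact (hF i0).2 (mem_univ _) (mem_univ _) hi0 ha hb hab
  calc (fun x : ∀ i, E i => ∑ i, F i (x i)) (a • x + b • y)
      = ∑ i, F i ((a • x + b • y) i) := rfl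
    _ < ∑ i, (a * F i (x i) + b * F i (y i)) := key
    _ = a • ∑ i, F i (x i) + b • ∑ i, F i (y i) := by
        rw [Finset.sum_add_distrib, ← Finset.mul_sum, ← Finset.mul_sum]; rfl

theorem myStrictConvexOn_norm_rpow {F : Type*} [NormedAddCommGroup F] [NormedSpace ℝ F]
    [StrictConvexSpace ℝ F] {q : ℝ} (hq : 1 < q) :
    StrictConvexOn ℝ Set.univ (fun x : F => ‖x‖ ^ q) := by
  have hq0 : (0 : ℝ) < q := one_pos.trans hq
  refine ⟨convex_univ, fun x _ y _ hxy a b ha hb hab => ?_⟩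
  rcases eq_or_ne ‖x‖ ‖y‖ with h | h
  · have hx0 : x ≠ 0 := by
      rintro rfl
      rw [norm_zero, eq_comm, norm_eq_zero] at h
      exact hxy (by simp [h])
    have hnx : (0:ℝ) < ‖x‖ := norm_pos_iff.mpr hx0
    have hmem : a • x + b • y ∈ Metric.ball (0 : F) ‖x‖ := by
      refine combo_mem_ball_of_ne ?_ ?_ hxy ha hb hab
      · simp [Metric.mem_closedBall]
      · simp [Metric.mem_closedBall, ← h]
    rw [Metric.mem_ball, dist_zero_right] at hmem
    calc ‖a • x + b • y‖ ^ q < ‖x‖ ^ q := Real.rpow_lt_rpow (norm_nonneg _) hmem hq0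
      _ = a • ‖x‖ ^ q + b • ‖y‖ ^ q := by
          rw [← h, smul_eq_mul, smul_eq_mul, ← add_mul, hab, one_mul]
  · have h1 : ‖a • x + b • y‖ ≤ a • ‖x‖ + b • ‖y‖ := by
      calc ‖a • x + b • y‖ ≤ ‖a • x‖ + ‖b • y‖ := norm_add_le _ _
        _ = a • ‖x‖ + b • ‖y‖ := by
            rw [norm_smul, norm_smul, Real.norm_of_nonneg ha.le, Real.norm_of_nonneg hb.le]; rfl
    calc ‖a • x + b • y‖ ^ q ≤ (a • ‖x‖ + b • ‖y‖) ^ q :=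
          Real.rpow_le_rpow (norm_nonneg _) h1 hq0.le
      _ < a • ‖x‖ ^ q + b • ‖y‖ ^ q :=
          (strictConvexOn_rpow hq).2 (norm_nonneg x) (norm_nonneg y) h ha hb hab

theorem myPiLpReal_scs {κ : Type} [Fintype κ] (hκ : Nonempty κ) (p : ℝ≥0∞) [Fact (1 ≤ p)]
    (hp : 1 < p.toReal) :
    StrictConvexSpace ℝ (PiLp p (fun _ : κ => ℝ)) := by
  haveI := hκ
  have hp0 : 0 < p.toReal := one_pos.trans hp
  refine myStrictConvexSpace_of_rpow hp ?_
  have hsc := myStrictConvexOn_sum_pi (ι := κ) (E := fun _ => ℝ)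
      (fun _ t => |t| ^ p.toReal) (fun _ => myStrictConvexOn_abs_rpow hp)
  have heq : (fun x : PiLp p (fun _ : κ => ℝ) => ‖x‖ ^ p.toReal)
      = fun x : PiLp p (fun _ : κ => ℝ) => ∑ i, |x i| ^ p.toReal := by
    funext x
    rw [PiLp.norm_eq_sum hp0,
      ← Real.rpow_mul (Finset.sum_nonneg fun _ _ => Real.rpow_nonneg (norm_nonneg _) _),
      one_div, inv_mul_cancel₀ hp0.ne', Real.rpow_one]
    simp [Real.norm_eq_abs]
  rw [heq]
  refine ⟨convex_univ, fun x _ y _ hxy a b ha hb hab => ?_⟩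
  have := hsc.2 (mem_univ x.ofLp) (mem_univ y.ofLp)
    (fun h => hxy (WithLp.ofLp_injective _ h)) ha hb hab
  simpa using this

theorem myPiLp_scs {ι : Type} [Fintype ι] (hι : Nonempty ι) {E : ι → Type*}
    [∀ i, NormedAddCommGroup (E i)] [∀ i, NormedSpace ℝ (E i)]
    (hE : ∀ i, StrictConvexSpace ℝ (E i))
    (s : ℝ≥0∞) [Fact (1 ≤ s)] (hs : 1 < s.toReal) :
    StrictConvexSpace ℝ (PiLp s E) := by
  haveI := hι
  haveI := hE
  have hs0 : 0 < s.toReal := one_pos.trans hs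
  refine myStrictConvexSpace_of_rpow hs ?_
  have hsc := myStrictConvexOn_sum_pi (ι := ι) (E := E)
      (fun i v => ‖v‖ ^ s.toReal) (fun i => myStrictConvexOn_norm_rpow hs)
  have heq : (fun x : PiLp s E => ‖x‖ ^ s.toReal)
      = fun x : PiLp s E => ∑ i, ‖x i‖ ^ s.toReal := by
    funext x
    rw [PiLp.norm_eq_sum hs0,
      ← Real.rpow_mul (Finset.sum_nonneg fun _ _ => Real.rpow_nonneg (norm_nonneg _) _),
      one_div, inv_mul_cancel₀ hs0.ne', Real.rpow_one]
  rw [heq]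
  refine ⟨convex_univ, fun x _ y _ hxy a b ha hb hab => ?_⟩
  have := hsc.2 (mem_univ x.ofLp) (mem_univ y.ofLp)
    (fun h => hxy (WithLp.ofLp_injective _ h)) ha hb hab
  simpa using this

theorem statement3 {d dbar : ℕ} (hd : 1 ≤ d)
    (G : Fin dbar → Finset (Fin d)) (hG : IsPartition G)
    (α : Fin dbar → ℝ) (hα : ∀ i, 0 < α i)
    (p s : ℝ) (hp : 1 < p) (hs : 1 < s)
    (a b : Fin d → ℝ) (ha : a ≠ 0) :
    gnorm G α (ENNReal.ofReal p) (ENNReal.ofReal s) (a + b) =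
        gnorm G α (ENNReal.ofReal p) (ENNReal.ofReal s) a +
          gnorm G α (ENNReal.ofReal p) (ENNReal.ofReal s) b
      ↔ ∃ τ : ℝ, 0 ≤ τ ∧ τ • a = b := by
  set p' := ENNReal.ofReal p with hp'
  set s' := ENNReal.ofReal s with hs'
  haveI : Fact (1 ≤ p') := ⟨ENNReal.one_le_ofReal.mpr hp.le⟩
  haveI : Fact (1 ≤ s') := ⟨ENNReal.one_le_ofReal.mpr hs.le⟩
  have hpt : p'.toReal = p := ENNReal.toReal_ofReal (by linarith)
  have hst : s'.toReal = s := ENNReal.toReal_ofReal (by linarith)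
  have hpt1 : 1 < p'.toReal := by rw [hpt]; exact hp
  have hst1 : 1 < s'.toReal := by rw [hst]; exact hs
  have hst0 : 0 < s'.toReal := one_pos.trans hst1
  -- the target space
  have hdbar : Nonempty (Fin dbar) := by
    obtain ⟨i, _⟩ := hG.2.2 ⟨0, hd⟩
    exact ⟨i⟩
  have hκ : ∀ i : Fin dbar, Nonempty {k // k ∈ G i} := by
    intro i
    obtain ⟨k, hk⟩ := hG.1 i
    exact ⟨⟨k, hk⟩⟩
  haveI : StrictConvexSpace ℝ (PiLp s' (fun i : Fin dbar => PiLp p' (fun _ : {k // k ∈ G i} => ℝ))) :=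
    myPiLp_scs hdbar (fun i => myPiLpReal_scs (hκ i) p' hpt1) s' hst1
  -- the linear embedding
  set L : (Fin d → ℝ) → PiLp s' (fun i : Fin dbar => PiLp p' (fun _ : {k // k ∈ G i} => ℝ)) :=
    fun x => (WithLp.equiv s' _).symm
      (fun i => (WithLp.equiv p' ({k // k ∈ G i} → ℝ)).symm (fun j => α i * x j.1)) with hL
  have hLadd : ∀ x y, L (x + y) = L x + L y := by
    intro x y; ext i j
    show α i * (x j.1 + y j.1) = α i * x j.1 + α i * y j.1
    ring
  have hLsmul : ∀ (τ : ℝ) x, L (τ • x) = τ • L x := by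
    intro τ x; ext i j
    show α i * (τ * x j.1) = τ * (α i * x j.1)
    ring
  have hLinj : ∀ x y, L x = L y → x = y := by
    intro x y h
    funext k
    obtain ⟨i, hk⟩ := hG.2.2 k
    have := congrArg (fun z => z i ⟨k, hk⟩) h
    have h2 : α i * x k = α i * y k := this
    exact mul_left_cancel₀ (hα i).ne' h2
  have hLa : L a ≠ 0 := by
    intro hc
    apply ha
    refine hLinj a 0 ?_
    rw [hc]; ext i j
    show (0:ℝ) = α i * (0:ℝ)
    ring
  -- gnorm = ‖L x‖
  have main : ∀ x, gnorm G α p' s' x = ‖L x‖ := by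
    intro x
    have hterm : ∀ i : Fin dbar,
        ‖L x i‖ = |α i * lpn p' (fun j : {k // k ∈ G i} => x j.1)| := by
      intro i
      have hsc : L x i = α i • ((WithLp.equiv p' ({k // k ∈ G i} → ℝ)).symm
          (fun j => x j.1)) := by
        ext j
        show α i * x j.1 = α i * x j.1
        rfl
      rw [hsc, norm_smul, Real.norm_eq_abs, abs_mul, lpn,
        abs_of_nonneg (norm_nonneg _)]
    have lhs : gnorm G α p' s' x =
        (∑ i, |α i * lpn p' (fun j : {k // k ∈ G i} => x j.1)| ^ s'.toReal) ^ (1 / s'.toReal) := by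
      rw [gnorm, lpn, PiLp.norm_eq_sum hst0]
      congr 1
    rw [lhs, PiLp.norm_eq_sum hst0]
    congr 1
    exact Finset.sum_congr rfl fun i _ => by rw [hterm i]
  constructor
  · intro h
    rw [main, main, main, hLadd] at h
    have hray := sameRay_iff_norm_add.mpr h
    obtain ⟨τ, hτ, hτa⟩ := hray.exists_nonneg_left hLa
    refine ⟨τ, hτ, hLinj _ _ ?_⟩
    rw [hLsmul, hτa]
  · rintro ⟨τ, hτ, rfl⟩
    rw [main, main, main, hLadd]
    refine sameRay_iff_norm_add.mp ?_
    rw [hLsmul]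
    exact SameRay.sameRay_nonneg_smul_right (L a) hτ
end

section
/- Let δ ≥ 0, E ≥ 0 and b ≥ 0 be real numbers. Then the infimum over γ > b² of γδ + γE/(γ − b²) equals (√E + b√δ)². Moreover, if δ > 0, E > 0 and b > 0, the infimum is attained at γ = b² + b√(E/δ). -/
open scoped ENNReal BigOperators
open MeasureTheory Filter

theorem statement8 (δ E b : ℝ) (hδ : 0 ≤ δ) (hE : 0 ≤ E) (hb : 0 ≤ b) :
    sInf {v : ℝ | ∃ γ : ℝ, b ^ 2 < γ ∧ v = γ * δ + γ * E / (γ - b ^ 2)}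
        = (Real.sqrt E + b * Real.sqrt δ) ^ 2 ∧
      (0 < δ → 0 < E → 0 < b →
        (b ^ 2 + b * Real.sqrt (E / δ)) * δ +
            (b ^ 2 + b * Real.sqrt (E / δ)) * E / ((b ^ 2 + b * Real.sqrt (E / δ)) - b ^ 2)
          = (Real.sqrt E + b * Real.sqrt δ) ^ 2) := by
  have ha2 : Real.sqrt E ^ 2 = E := Real.sq_sqrt hE
  have hc2 : Real.sqrt δ ^ 2 = δ := Real.sq_sqrt hδ
  set a := Real.sqrt E with ha
  set c := Real.sqrt δ with hc
  have ha0 : 0 ≤ a := Real.sqrt_nonneg E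
  have hc0 : 0 ≤ c := Real.sqrt_nonneg δ
  -- key identity: for t > 0, value at γ = b² + t equals target + (c t − a b)²/t
  have key : ∀ t : ℝ, 0 < t →
      (b ^ 2 + t) * δ + (b ^ 2 + t) * E / ((b ^ 2 + t) - b ^ 2)
        = (a + b * c) ^ 2 + (c * t - a * b) ^ 2 / t := by
    intro t ht
    have ht' : t ≠ 0 := ne_of_gt ht
    rw [← ha2, ← hc2]
    rw [show b ^ 2 + t - b ^ 2 = t by ring]
    field_simp
    ring
  have hmem : ∀ t : ℝ, 0 < t →
      (a + b * c) ^ 2 + (c * t - a * b) ^ 2 / t ∈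
        {v : ℝ | ∃ γ : ℝ, b ^ 2 < γ ∧ v = γ * δ + γ * E / (γ - b ^ 2)} := by
    intro t ht
    exact ⟨b ^ 2 + t, by linarith, (key t ht).symm⟩
  have hne : {v : ℝ | ∃ γ : ℝ, b ^ 2 < γ ∧ v = γ * δ + γ * E / (γ - b ^ 2)}.Nonempty :=
    ⟨_, hmem 1 one_pos⟩
  have hbdd : BddBelow {v : ℝ | ∃ γ : ℝ, b ^ 2 < γ ∧ v = γ * δ + γ * E / (γ - b ^ 2)} := by
    refine ⟨(a + b * c) ^ 2, ?_⟩
    rintro v ⟨γ, hγ, rfl⟩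
    have ht : 0 < γ - b ^ 2 := by linarith
    have := key (γ - b ^ 2) ht
    rw [show b ^ 2 + (γ - b ^ 2) = γ by ring] at this
    rw [this]
    have : 0 ≤ (c * (γ - b ^ 2) - a * b) ^ 2 / (γ - b ^ 2) :=
      div_nonneg (sq_nonneg _) ht.le
    linarith
  constructor
  · apply le_antisymm
    · rw [Real.sInf_le_iff hbdd hne]
      intro ε hε
      rcases eq_or_lt_of_le hc0 with hc0' | hc0'
      · -- c = 0, take t large
        refine ⟨_, hmem ((a * b) ^ 2 / ε + 1) (by positivity), ?_⟩
        rw [← hc0']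
        have ht : (0:ℝ) < (a * b) ^ 2 / ε + 1 := by positivity
        have : (0 * ((a * b) ^ 2 / ε + 1) - a * b) ^ 2 / ((a * b) ^ 2 / ε + 1) < ε := by
          rw [div_lt_iff₀ ht]
          have : (a*b)^2/ε * ε = (a*b)^2 := div_mul_cancel₀ _ (ne_of_gt hε)
          nlinarith
        linarith
      · rcases eq_or_lt_of_le (mul_nonneg ha0 hb) with hab | hab
        · -- a*b = 0, take t small
          refine ⟨_, hmem (ε / (2 * c ^ 2)) (by positivity), ?_⟩
          rw [← hab]
          have ht : (0:ℝ) < ε / (2 * c ^ 2) := by positivity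
          have hcne : c ^ 2 ≠ 0 := by positivity
          have : (c * (ε / (2 * c ^ 2)) - 0) ^ 2 / (ε / (2 * c ^ 2)) = c ^ 2 * (ε / (2 * c ^ 2)) := by
            field_simp
            ring
          rw [this]
          have : c ^ 2 * (ε / (2 * c ^ 2)) = ε / 2 := by field_simp
          rw [this]; linarith
        · -- exact minimizer t = a*b/c
          refine ⟨_, hmem (a * b / c) (div_pos hab hc0'), ?_⟩
          have : c * (a * b / c) - a * b = 0 := by field_simp; ring
          rw [this]
          simp
          linarith
    · exact le_csInf hne (by
        rintro v ⟨γ, hγ, rfl⟩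
        have ht : 0 < γ - b ^ 2 := by linarith
        have h := key (γ - b ^ 2) ht
        rw [show b ^ 2 + (γ - b ^ 2) = γ by ring] at h
        rw [h]
        have : 0 ≤ (c * (γ - b ^ 2) - a * b) ^ 2 / (γ - b ^ 2) :=
          div_nonneg (sq_nonneg _) ht.le
        linarith)
  · intro hδ' hE' hb'
    have hc' : 0 < c := Real.sqrt_pos.mpr hδ'
    have ha' : 0 < a := Real.sqrt_pos.mpr hE'
    have hr : Real.sqrt (E / δ) = a / c := Real.sqrt_div hE δ
    rw [hr]
    have ht : 0 < b * (a / c) := by positivity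
    have h := key (b * (a / c)) ht
    rw [show b ^ 2 + b * (a / c) = b ^ 2 + b * (a / c) from rfl] at h
    rw [h]
    have : c * (b * (a / c)) - a * b = 0 := by field_simp; ring
    rw [this]
    simp
end
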